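/- The following statements are equivalent: (1) (X^Γ, σ_φ) is sensitive; (2) (X^Γ, σ_φ) is strongly sensitive; (3) φ : Γ → Γ has at least one non-quasi-periodic point. -/
import Mathlib


open Filter Topology

open scoped Classical in
/-- The metric `D` on `X^Γ`, via a fixed bijection `e : ℕ ≃ Γ`. -/
noncomputable def gsD {X Γ : Type*} (e : ℕ ≃ Γ) (x y : Γ → X) : ℝ :=
  ∑' n : ℕ, (if x (e n) = y (e n) then (0 : ℝ) else 1) / 2 ^ (n + 1)

/-- The generalized shift `σ_φ`. -/
def gshift {X Γ : Type*} (φ : Γ → Γ) : (Γ → X) → (Γ → X) := fun x => x ∘ φ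

/-- `(x, y)` is a scrambled pair of `f` with respect to the distance function `d`. -/
def scrambledPair {Z : Type*} (d : Z → Z → ℝ) (f : Z → Z) (x y : Z) : Prop :=
  liminf (fun n : ℕ => d (f^[n] x) (f^[n] y)) atTop = 0 ∧
    0 < limsup (fun n : ℕ => d (f^[n] x) (f^[n] y)) atTop

section Aux

open scoped Classical

variable {X Γ : Type*} (e : ℕ ≃ Γ)

private lemma gs_term_nonneg (x y : Γ → X) (n : ℕ) :
    0 ≤ (if x (e n) = y (e n) then (0 : ℝ) else 1) / 2 ^ (n + 1) := by
  apply div_nonneg _ (by positivity)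
  split <;> norm_num

private lemma gs_term_le (x y : Γ → X) (n : ℕ) :
    (if x (e n) = y (e n) then (0 : ℝ) else 1) / 2 ^ (n + 1) ≤ (1 / 2 : ℝ) ^ (n + 1) := by
  have h : ((1 : ℝ) / 2) ^ (n + 1) = 1 / 2 ^ (n + 1) := by
    rw [div_pow, one_pow]
  rw [h]
  gcongr
  split <;> norm_num

private lemma gs_geo_summable (N : ℕ) :
    Summable (fun k : ℕ => ((1 : ℝ) / 2) ^ (k + N)) := by
  have : (fun k : ℕ => ((1 : ℝ) / 2) ^ (k + N)) =
      fun k : ℕ => ((1 : ℝ) / 2) ^ k * (1 / 2) ^ N := by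
    funext k; rw [pow_add]
  rw [this]
  exact summable_geometric_two.mul_right _

private lemma gsD_summable (x y : Γ → X) :
    Summable (fun n : ℕ => (if x (e n) = y (e n) then (0 : ℝ) else 1) / 2 ^ (n + 1)) := by
  apply Summable.of_nonneg_of_le (gs_term_nonneg e x y) (gs_term_le e x y)
  simpa using gs_geo_summable 1

lemma le_gsD (x y : Γ → X) (k : ℕ) (h : x (e k) ≠ y (e k)) :
    ((1 : ℝ) / 2) ^ (k + 1) ≤ gsD e x y := by
  have h1 := Summable.le_tsum (gsD_summable e x y) k (fun j _ => gs_term_nonneg e x y j)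
  have h2 : ((1 : ℝ) / 2) ^ (k + 1) =
      (if x (e k) = y (e k) then (0 : ℝ) else 1) / 2 ^ (k + 1) := by
    rw [if_neg h, div_pow, one_pow]
  rw [h2]
  exact h1

lemma gsD_le (x y : Γ → X) (N : ℕ) (h : ∀ i < N, x (e i) = y (e i)) :
    gsD e x y ≤ ((1 : ℝ) / 2) ^ N := by
  set f : ℕ → ℝ := fun n => (if x (e n) = y (e n) then (0 : ℝ) else 1) / 2 ^ (n + 1) with hf
  have hzero : ∀ i < N, f i = 0 := by
    intro i hi
    simp [hf, h i hi]
  have hsupp : Function.support f ⊆ Set.range (fun k : ℕ => k + N) := by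
    intro n hn
    rcases lt_or_ge n N with hlt | hge
    · exact absurd (hzero n hlt) hn
    · exact ⟨n - N, Nat.sub_add_cancel hge⟩
  have key : ∑' k : ℕ, f (k + N) = gsD e x y :=
    Function.Injective.tsum_eq (add_left_injective N) hsupp
  rw [← key]
  have hsum1 : Summable (fun k : ℕ => f (k + N)) :=
    (gsD_summable e x y).comp_injective (add_left_injective N)
  calc ∑' k : ℕ, f (k + N) ≤ ∑' k : ℕ, ((1 : ℝ) / 2) ^ (k + N + 1) :=
        Summable.tsum_le_tsum (fun k => gs_term_le e x y (k + N)) hsum1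
          (by simpa [add_assoc] using gs_geo_summable (N + 1))
    _ = ((1 : ℝ) / 2) ^ N := by
        have hc : ∀ k : ℕ, ((1 : ℝ) / 2) ^ (k + N + 1) = (1 / 2) ^ k * (1 / 2) ^ (N + 1) := by
          intro k; rw [add_assoc, pow_add]
        rw [tsum_congr hc, tsum_mul_right, tsum_geometric_two, pow_succ]
        ring

lemma gshift_iterate (φ : Γ → Γ) (n : ℕ) (x : Γ → X) :
    (gshift φ)^[n] x = x ∘ φ^[n] := by
  induction n generalizing x with
  | zero => rfl
  | succ n ih =>
    rw [Function.iterate_succ_apply, ih, Function.iterate_succ']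
    rfl

lemma orbit_mem {φ : Γ → Γ} {a : Γ} {n m : ℕ} (hm : m < n) (h : φ^[n] a = φ^[m] a) :
    ∀ k : ℕ, ∃ j < n, φ^[k] a = φ^[j] a := by
  intro k
  induction k using Nat.strong_induction_on with
  | _ k ih =>
    rcases lt_or_ge k n with hk | hk
    · exact ⟨k, hk, rfl⟩
    · have h1 : φ^[k] a = φ^[k - n + m] a := by
        have hkn : k = (k - n) + n := (Nat.sub_add_cancel hk).symm
        conv_lhs => rw [hkn]
        rw [Function.iterate_add_apply, h, ← Function.iterate_add_apply]
      obtain ⟨j, hj, hjeq⟩ := ih (k - n + m) (by omega)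
      exact ⟨j, hj, h1.trans hjeq⟩

end Aux

/-- The following are equivalent: (1) `(X^Γ, σ_φ)` is sensitive;
(2) `(X^Γ, σ_φ)` is strongly sensitive; (3) `φ` has a non-quasi-periodic point. -/
theorem stmt12 {X Γ : Type*} [TopologicalSpace X] [DiscreteTopology X] [Finite X]
    [Nontrivial X] [Countable Γ] [Infinite Γ] (e : ℕ ≃ Γ) (φ : Γ → Γ) :
    List.TFAE
      [ -- (1) sensitive
        (∃ ε > (0 : ℝ), ∀ x : Γ → X, ∀ U : Set (Γ → X), IsOpen U → x ∈ U →
          ∃ n : ℕ, ∃ y ∈ U, ε < gsD e ((gshift φ)^[n] x) ((gshift φ)^[n] y)),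
        -- (2) strongly sensitive
        (∃ ε > (0 : ℝ), ∀ x : Γ → X, ∀ U : Set (Γ → X), IsOpen U → x ∈ U →
          ∃ y ∈ U, ∃ n₀ : ℕ, ∀ n ≥ n₀,
            ε < gsD e ((gshift φ)^[n] x) ((gshift φ)^[n] y)),
        -- (3) φ has a non-quasi-periodic point
        (∃ a : Γ, ¬ ∃ n m : ℕ, 1 ≤ m ∧ m < n ∧ φ^[n] a = φ^[m] a) ] := by
  classical
  tfae_have 2 → 1 := by
    rintro ⟨ε, hε, h⟩
    refine ⟨ε, hε, fun x U hU hx => ?_⟩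
    obtain ⟨y, hy, n₀, hn⟩ := h x U hU hx
    exact ⟨n₀, y, hy, hn n₀ le_rfl⟩
  tfae_have 1 → 3 := by
    rintro ⟨ε, hε, hsen⟩
    by_contra hno
    push_neg at hno
    obtain ⟨N, hN⟩ := exists_pow_lt_of_lt_one hε (by norm_num : (1 : ℝ) / 2 < 1)
    have horb : ∀ a : Γ, (Set.range fun k : ℕ => φ^[k] a).Finite := by
      intro a
      obtain ⟨n, m, _, hmn, hfix⟩ := hno a
      apply Set.Finite.subset (Set.finite_range fun j : Fin n => φ^[(j : ℕ)] a)
      rintro _ ⟨k, rfl⟩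
      obtain ⟨j, hj, hje⟩ := orbit_mem hmn hfix k
      exact ⟨⟨j, hj⟩, hje.symm⟩
    set G : Set Γ := ⋃ i ∈ Finset.range N, Set.range fun k : ℕ => φ^[k] (e i) with hG
    have hGfin : G.Finite :=
      Set.Finite.biUnion (Finset.range N).finite_toSet (fun i _ => horb (e i))
    obtain ⟨x0⟩ := (inferInstance : Nonempty X)
    set x : Γ → X := fun _ => x0 with hxdef
    set U : Set (Γ → X) := G.pi (fun γ => {x γ}) with hUdef
    have hUopen : IsOpen U := isOpen_set_pi hGfin (fun γ _ => isOpen_discrete _)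
    have hxU : x ∈ U := fun γ _ => rfl
    obtain ⟨n, y, hyU, hlt⟩ := hsen x U hUopen hxU
    have hagree : ∀ i < N, ((gshift φ)^[n] x) (e i) = ((gshift φ)^[n] y) (e i) := by
      intro i hi
      rw [gshift_iterate, gshift_iterate]
      have hmem : φ^[n] (e i) ∈ G := by
        rw [hG]
        exact Set.mem_biUnion (Finset.mem_range.mpr hi) ⟨n, rfl⟩
      exact (hyU _ hmem).symm
    have := gsD_le e _ _ N hagree
    linarith
  tfae_have 3 → 2 := by
    rintro ⟨a, ha⟩
    push_neg at ha
    refine ⟨(1 / 2 : ℝ) ^ (e.symm a + 2), by positivity, fun x U hU hx => ?_⟩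
    obtain ⟨I, u, hIu, hsub⟩ := isOpen_pi_iff.mp hU x hx
    have hinj : Set.InjOn (fun n : ℕ => φ^[n] a) {n : ℕ | 1 ≤ n} := by
      intro p hp q hq hpq
      by_contra hne
      rcases lt_or_gt_of_ne hne with hlt | hlt
      · exact ha q p hp hlt hpq.symm
      · exact ha p q hq hlt hpq
    have hS : {n : ℕ | 1 ≤ n ∧ φ^[n] a ∈ I}.Finite := by
      apply Set.Finite.of_finite_image ?_ (hinj.mono (fun n hn => hn.1))
      apply I.finite_toSet.subset
      rintro _ ⟨n, ⟨_, hnI⟩, rfl⟩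
      exact hnI
    obtain ⟨b, hb⟩ := hS.bddAbove
    set n₀ : ℕ := b + 1 with hn₀
    have hflip : ∀ v : X, ∃ w : X, w ≠ v := fun v => exists_ne v
    choose flip hflipne using hflip
    set y : Γ → X := fun γ => if ∃ n, n₀ ≤ n ∧ γ = φ^[n] a then flip (x γ) else x γ with hy
    have hyU : y ∈ U := by
      apply hsub
      intro γ hγ
      have heq : y γ = x γ := by
        rw [hy]
        dsimp only
        rw [if_neg]
        rintro ⟨n, hn, rfl⟩
        have hmem : n ∈ {n : ℕ | 1 ≤ n ∧ φ^[n] a ∈ I} := ⟨by omega, hγ⟩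
        have := hb hmem
        omega
      rw [heq]
      exact (hIu γ hγ).2
    refine ⟨y, hyU, n₀, fun n hn => ?_⟩
    have hdiff : ((gshift φ)^[n] x) a ≠ ((gshift φ)^[n] y) a := by
      rw [gshift_iterate, gshift_iterate]
      show x (φ^[n] a) ≠ y (φ^[n] a)
      rw [hy]
      dsimp only
      rw [if_pos ⟨n, hn, rfl⟩]
      exact (hflipne _).symm
    have hle := le_gsD e ((gshift φ)^[n] x) ((gshift φ)^[n] y) (e.symm a)
      (by simpa [Equiv.apply_symm_apply] using hdiff)
    have hpos : (0 : ℝ) < (1 / 2 : ℝ) ^ (e.symm a + 1) := by positivity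
    have hlt2 : ((1 : ℝ) / 2) ^ (e.symm a + 2) < (1 / 2 : ℝ) ^ (e.symm a + 1) := by
      rw [pow_succ]
      linarith
    linarith
  tfae_finish
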